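/- Let Y_0 = 0, Y_1,...,Y_n satisfy for all t: |Y_t − Y_{t−1}| ≤ 1 almost surely and E[Y_t − Y_{t−1} | F_{t−1}] ≤ −α·E[(Y_t − Y_{t−1})^2 | F_{t−1}] for some α ∈ (0, 1/2). Then for all λ ≥ 0, P[∃ t ≤ n : Y_t ≥ λ] ≤ exp(−αλ). -/

import Mathlib

open MeasureTheory


lemma exp_le_one_add_add_sq {x : ℝ} (hx : |x| ≤ 1) : Real.exp x ≤ 1 + x + x ^ 2 := by
  have h := Real.exp_bound hx (n := 2) (by norm_num)
  have hsum : ∑ m ∈ Finset.range 2, x ^ m / (Nat.factorial m) = 1 + x := by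
    simp [Finset.sum_range_succ]
  rw [hsum] at h
  have h2 := (abs_le.mp h).2
  have h3 : |x| ^ 2 = x ^ 2 := sq_abs x
  norm_num at h2
  nlinarith [sq_nonneg x]


/-- Freedman-type maximal inequality (Corollary 16): if `Y₀ = 0`, the increments `Y_t - Y_{t-1}`
are bounded by `1` and satisfy the conditional drift condition
`E[Y_t - Y_{t-1} | F_{t-1}] ≤ -α E[(Y_t - Y_{t-1})² | F_{t-1}]` for some `α ∈ (0, 1/2)`,
then `P[∃ t ≤ n, Y_t ≥ λ] ≤ exp(-αλ)` for every `λ ≥ 0`. -/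
theorem freedman_drift_maximal_tail {Ω : Type*} {m0 : MeasurableSpace Ω} (μ : Measure Ω)
    [IsProbabilityMeasure μ] (ℱ : Filtration ℕ m0) (n : ℕ) (Y : ℕ → Ω → ℝ)
    (hadapted : Adapted ℱ Y) (hY0 : ∀ ω, Y 0 ω = 0) (α : ℝ)
    (hα : α ∈ Set.Ioo (0 : ℝ) (1 / 2))
    (hbdd : ∀ t, ∀ᵐ ω ∂μ, |Y (t + 1) ω - Y t ω| ≤ 1)
    (hdrift : ∀ t, ∀ᵐ ω ∂μ,
      (μ[fun ω' => Y (t + 1) ω' - Y t ω' | ℱ t]) ω ≤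
        -α * (μ[fun ω' => (Y (t + 1) ω' - Y t ω') ^ 2 | ℱ t]) ω)
    (lam : ℝ) (hlam : 0 ≤ lam) :
    μ {ω | ∃ t ≤ n, lam ≤ Y t ω} ≤ ENNReal.ofReal (Real.exp (-α * lam)) := by
  obtain ⟨hα0, hα2⟩ := hα
  -- the exponential process
  set M : ℕ → Ω → ℝ := fun t ω => Real.exp (α * Y t ω) with hMdef
  have hMadapted : Adapted ℱ M := fun t =>
    Real.continuous_exp.measurable.comp (measurable_const.mul (hadapted t))
  have hMmeas : ∀ t, StronglyMeasurable[m0] (M t) := fun t => (hMadapted t).stronglyMeasurable.mono (ℱ.le t)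
  have hYmeas : ∀ t, StronglyMeasurable[m0] (Y t) := fun t => (hadapted t).stronglyMeasurable.mono (ℱ.le t)
  -- a.e. boundedness of Y
  have hYbdd : ∀ t, ∀ᵐ ω ∂μ, |Y t ω| ≤ t := by
    intro t
    induction t with
    | zero => filter_upwards with ω; simp [hY0]
    | succ t ih =>
      filter_upwards [ih, hbdd t] with ω h1 h2
      have := abs_add_le (Y t ω) (Y (t + 1) ω - Y t ω)
      push_cast
      simp only [add_sub_cancel] at this
      linarith
  -- integrability of M
  have hMint : ∀ t, Integrable (M t) μ := by
    intro t
    refine ⟨(hMmeas t).aestronglyMeasurable, HasFiniteIntegral.of_bounded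
      (C := Real.exp (α * t)) ?_⟩
    filter_upwards [hYbdd t] with ω h
    rw [Real.norm_eq_abs, abs_of_pos (Real.exp_pos _)]
    exact Real.exp_le_exp.2 (mul_le_mul_of_nonneg_left ((abs_le.1 h).2) hα0.le)
  -- increments
  have hΔmeas : ∀ t, StronglyMeasurable[m0]
      (fun ω => Y (t + 1) ω - Y t ω) := fun t => (hYmeas (t + 1)).sub (hYmeas t)
  have hΔint : ∀ t, Integrable (fun ω => Y (t + 1) ω - Y t ω) μ := by
    intro t
    refine ⟨(hΔmeas t).aestronglyMeasurable, HasFiniteIntegral.of_bounded (C := 1) ?_⟩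
    filter_upwards [hbdd t] with ω h using h
  have hΔsqint : ∀ t, Integrable (fun ω => (Y (t + 1) ω - Y t ω) ^ 2) μ := by
    intro t
    refine ⟨((hΔmeas t).pow 2).aestronglyMeasurable, HasFiniteIntegral.of_bounded (C := 1) ?_⟩
    filter_upwards [hbdd t] with ω h
    rw [Real.norm_eq_abs, abs_pow]
    calc |Y (t + 1) ω - Y t ω| ^ 2 ≤ 1 ^ 2 := pow_le_pow_left₀ (abs_nonneg _) h 2
      _ = 1 := one_pow 2
  have hexpΔint : ∀ t, Integrable (fun ω => Real.exp (α * (Y (t + 1) ω - Y t ω))) μ := by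
    intro t
    refine ⟨(Real.continuous_exp.comp_stronglyMeasurable
      (stronglyMeasurable_const.mul (hΔmeas t))).aestronglyMeasurable,
      HasFiniteIntegral.of_bounded (C := Real.exp α) ?_⟩
    filter_upwards [hbdd t] with ω h
    rw [Real.norm_eq_abs, abs_of_pos (Real.exp_pos _)]
    exact Real.exp_le_exp.2 (by nlinarith [(abs_le.1 h).2])
  -- key conditional bound : E[exp(α Δ)|ℱ t] ≤ 1 a.e.
  have hcond : ∀ t, (μ[fun ω => Real.exp (α * (Y (t + 1) ω - Y t ω)) | ℱ t])
      ≤ᵐ[μ] fun _ => (1 : ℝ) := by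
    intro t
    set g2 : Ω → ℝ := fun ω => Y (t + 1) ω - Y t ω with hg2
    set g3 : Ω → ℝ := fun ω => (Y (t + 1) ω - Y t ω) ^ 2 with hg3
    set F : Ω → ℝ := ((fun _ : Ω => (1 : ℝ)) + α • g2) + α ^ 2 • g3 with hF
    have hint2 : Integrable (α • g2) μ := (hΔint t).smul α
    have hint3 : Integrable (α ^ 2 • g3) μ := (hΔsqint t).smul (α ^ 2)
    have hintF : Integrable F μ := ((integrable_const 1).add hint2).add hint3
    have hle : (fun ω => Real.exp (α * (Y (t + 1) ω - Y t ω))) ≤ᵐ[μ] F := by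
      filter_upwards [hbdd t] with ω h
      have habs : |α * (Y (t + 1) ω - Y t ω)| ≤ 1 := by
        rw [abs_mul, abs_of_pos hα0]; nlinarith
      have hq := exp_le_one_add_add_sq habs
      simp only [hF, hg2, hg3, Pi.add_apply, Pi.smul_apply, smul_eq_mul]
      nlinarith [hq]
    have hmono := condExp_mono (m := ℱ t) (hexpΔint t) hintF hle
    have hA := condExp_add (m := ℱ t) (μ := μ) ((integrable_const (1 : ℝ)).add hint2) hint3
    have hB := condExp_add (m := ℱ t) (μ := μ) (integrable_const (1 : ℝ)) hint2
    have h3 := condExp_smul (m := ℱ t) (μ := μ) α g2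
    have h4 := condExp_smul (m := ℱ t) (μ := μ) (α ^ 2) g3
    have h5 : (μ[fun _ : Ω => (1 : ℝ) | ℱ t]) = fun _ => (1 : ℝ) :=
      condExp_const (μ := μ) (ℱ.le t) (1 : ℝ)
    filter_upwards [hmono, hA, hB, h3, h4, hdrift t] with ω e1 eA eB e3 e4 ed
    have e5 : (μ[fun _ : Ω => (1 : ℝ) | ℱ t]) ω = 1 := by rw [h5]
    have e3' : (μ[α • g2 | ℱ t]) ω = α * (μ[g2 | ℱ t]) ω := by
      rw [e3]; simp [smul_eq_mul]
    have e4' : (μ[α ^ 2 • g3 | ℱ t]) ω = α ^ 2 * (μ[g3 | ℱ t]) ω := by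
      rw [e4]; simp [smul_eq_mul]
    have eF : (μ[F | ℱ t]) ω = 1 + α * (μ[g2 | ℱ t]) ω + α ^ 2 * (μ[g3 | ℱ t]) ω := by
      rw [hF, eA]
      simp only [Pi.add_apply]
      rw [eB]
      simp only [Pi.add_apply]
      rw [e5, e3', e4']
    have hd : (μ[g2 | ℱ t]) ω ≤ -α * (μ[g3 | ℱ t]) ω := ed
    have := e1
    rw [eF] at this
    nlinarith [this, hd]
  -- M is a supermartingale
  have hMsuper : Supermartingale M ℱ μ := by
    refine supermartingale_nat hMadapted.stronglyAdapted hMint fun t => ?_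
    have hfact : M (t + 1) = (M t) * fun ω => Real.exp (α * (Y (t + 1) ω - Y t ω)) := by
      funext ω
      simp only [hMdef, Pi.mul_apply]
      rw [← Real.exp_add]
      ring_nf
    have hpull := condExp_mul_of_stronglyMeasurable_left (μ := μ) (hMadapted t).stronglyMeasurable
      (by rw [← hfact]; exact hMint (t + 1)) (hexpΔint t)
    calc μ[M (t + 1) | ℱ t] = μ[(M t) * fun ω => Real.exp (α * (Y (t + 1) ω - Y t ω)) | ℱ t] := by
          rw [hfact]
      _ ≤ᵐ[μ] M t := by
          filter_upwards [hpull, hcond t] with ω h1 h2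
          rw [h1]
          simp only [Pi.mul_apply]
          calc M t ω * (μ[fun ω => Real.exp (α * (Y (t + 1) ω - Y t ω)) | ℱ t]) ω
              ≤ M t ω * 1 := mul_le_mul_of_nonneg_left h2 (Real.exp_pos _).le
            _ = M t ω := mul_one _
  -- the stopping time
  set ε : ℝ := Real.exp (α * lam) with hεdef
  have hε : 0 < ε := Real.exp_pos _
  set τ : Ω → WithTop ℕ := fun ω => ((hittingBtwn M {y : ℝ | ε ≤ y} 0 n ω : ℕ) : WithTop ℕ) with hτdef
  have hτstop : IsStoppingTime ℱ τ := hMadapted.isStoppingTime_hittingBtwn measurableSet_Ici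
  have hsub : Submartingale (-M) ℱ μ := hMsuper.neg
  have hsvint : Integrable (stoppedValue M τ) μ := by
    have := (hsub.integrable_stoppedValue hτstop (N := n) (fun ω => WithTop.coe_le_coe.2 (hittingBtwn_le ω))).neg
    refine this.congr ?_
    filter_upwards with ω
    simp [stoppedValue]
  have hsvnonneg : ∀ ω, 0 ≤ stoppedValue M τ ω := fun ω => (Real.exp_pos _).le
  -- expectation bound via optional stopping
  have hexp1 : ∫ ω, stoppedValue M τ ω ∂μ ≤ 1 := by
    have h1 : ∫ ω, stoppedValue (-M) (fun _ => 0) ω ∂μ ≤ ∫ ω, stoppedValue (-M) τ ω ∂μ :=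
      hsub.expected_stoppedValue_mono (isStoppingTime_const ℱ 0) hτstop
        (fun ω => WithTop.coe_le_coe.2 (Nat.zero_le _)) (N := n) (fun ω => WithTop.coe_le_coe.2 (hittingBtwn_le ω))
    have e0 : stoppedValue (-M) (fun _ : Ω => 0) = fun _ => (-1 : ℝ) := by
      funext ω; simp [stoppedValue, hMdef, hY0]
    have eτ : stoppedValue (-M) τ = fun ω => -(stoppedValue M τ ω) := by
      funext ω; simp [stoppedValue]
    rw [e0, eτ] at h1
    rw [integral_const] at h1
    simp only [measureReal_def, measure_univ, ENNReal.toReal_one, one_smul] at h1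
    rw [integral_neg] at h1
    linarith
  -- the target set
  set A : Set Ω := {ω | ∃ t ≤ n, lam ≤ Y t ω} with hAdef
  have hAmeas : MeasurableSet A := by
    have : A = ⋃ t ∈ Set.Iic n, {ω | lam ≤ Y t ω} := by
      ext ω; simp [hAdef]
    rw [this]
    exact MeasurableSet.biUnion (Set.to_countable _)
      fun t _ => measurableSet_le measurable_const (hYmeas t).measurable
  have hge : ∀ ω ∈ A, ε ≤ stoppedValue M τ ω := by
    rintro ω ⟨t, ht, hY⟩
    have : stoppedValue M τ ω ∈ {y : ℝ | ε ≤ y} := by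
      refine stoppedValue_hittingBtwn_mem ⟨t, ⟨Nat.zero_le _, ht⟩, ?_⟩
      simp only [Set.mem_setOf_eq, hεdef, hMdef]
      exact Real.exp_le_exp.2 (mul_le_mul_of_nonneg_left hY hα0.le)
    exact this
  have key : ε * (μ A).toReal ≤ ∫ ω in A, stoppedValue M τ ω ∂μ :=
    setIntegral_ge_of_const_le_real hAmeas (measure_ne_top μ A) hge hsvint.integrableOn
  have h2 : ∫ ω in A, stoppedValue M τ ω ∂μ ≤ ∫ ω, stoppedValue M τ ω ∂μ :=
    setIntegral_le_integral hsvint (Filter.Eventually.of_forall hsvnonneg)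
  have hfinal : (μ A).toReal ≤ Real.exp (-α * lam) := by
    have h3 : ε * (μ A).toReal ≤ 1 := le_trans key (le_trans h2 hexp1)
    have : (μ A).toReal ≤ 1 / ε := by
      rw [le_div_iff₀ hε]; linarith
    rw [neg_mul, Real.exp_neg, ← hεdef]
    rwa [one_div] at this
  rw [ENNReal.le_ofReal_iff_toReal_le (measure_ne_top μ A) (Real.exp_nonneg _)]
  exact hfinal
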